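/- Let κ : F₂' → ℤ be a group homomorphism such that for every u ∈ F₂, κ(u [x,y] u⁻¹) = 1 if exp_y(u) ≡ 0 or 1 (mod 4), and κ(u [x,y] u⁻¹) = −1 if exp_y(u) ≡ 2 or 3 (mod 4). If z ∈ F₂' is a product of fourth powers in F₂ (i.e. z = u₁⁴ u₂⁴ ⋯ u_s⁴ for some s ≥ 1 and u₁, …, u_s ∈ F₂), then 4 divides κ(z). -/

import Mathlib

/-- The total exponent of `x` in a word of the free group on `{x, y}`. -/
def expx (w : FreeGroup (Fin 2)) : ℤ :=
  Multiplicative.toAdd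
    (FreeGroup.lift (fun i => Multiplicative.ofAdd (if i = 0 then (1 : ℤ) else 0)) w)

/-- The total exponent of `y` in a word of the free group on `{x, y}`. -/
def expy (w : FreeGroup (Fin 2)) : ℤ :=
  Multiplicative.toAdd
    (FreeGroup.lift (fun i => Multiplicative.ofAdd (if i = 1 then (1 : ℤ) else 0)) w)

open scoped commutatorElement

set_option maxRecDepth 10000

namespace S16

abbrev VV : Type := ZMod 4 → ZMod 4

def shf (s : ZMod 4) (m : VV) : VV := fun c => m (c - s)

@[simp] lemma shf_zero (m : VV) : shf 0 m = m := by funext c; simp [shf]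
lemma shf_shf (s t : ZMod 4) (m : VV) : shf s (shf t m) = shf (s + t) m := by
  funext c; simp [shf, sub_sub]
@[simp] lemma shf_add (s : ZMod 4) (m m' : VV) : shf s (m + m') = shf s m + shf s m' := rfl
@[simp] lemma shf_neg (s : ZMod 4) (m : VV) : shf s (-m) = -(shf s m) := rfl
@[simp] lemma shf_zero' (s : ZMod 4) : shf s (0 : VV) = 0 := rfl

def LL (m : VV) : ZMod 4 := 3 * m 1 + 2 * m 2 + 3 * m 3
def fb : VV := fun c => if c = 0 then 1 else 0

lemma LL_add (m m' : VV) : LL (m + m') = LL m + LL m' := by simp [LL]; ring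
lemma LL_neg (m : VV) : LL (-m) = - LL m := by simp [LL]; ring
@[simp] lemma LL_zero : LL 0 = 0 := by simp [LL]

lemma key4 : ∀ (s : ZMod 4) (m : VV),
    LL (m + shf s m + shf (s + s) m + shf (s + s + s) m) = 0 := by decide
lemma keyGen : ∀ s : ZMod 4,
    LL (shf s (fb - shf 1 fb)) = if s = 0 ∨ s = 1 then 1 else -1 := by decide
lemma keySum : ∀ s : ZMod 4, s + s + s + s = 0 := by decide

@[ext] structure GG where
  s : ZMod 4
  m : VV

instance : Mul GG := ⟨fun a b => ⟨a.s + b.s, a.m + shf a.s b.m⟩⟩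
instance : One GG := ⟨⟨0, 0⟩⟩
instance : Inv GG := ⟨fun a => ⟨-a.s, -(shf (-a.s) a.m)⟩⟩

@[simp] lemma mul_s (a b : GG) : (a * b).s = a.s + b.s := rfl
@[simp] lemma mul_m (a b : GG) : (a * b).m = a.m + shf a.s b.m := rfl
@[simp] lemma one_s : (1 : GG).s = 0 := rfl
@[simp] lemma one_m : (1 : GG).m = 0 := rfl
@[simp] lemma inv_s (a : GG) : (a⁻¹).s = -a.s := rfl
@[simp] lemma inv_m (a : GG) : (a⁻¹).m = -(shf (-a.s) a.m) := rfl

instance : Group GG where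
  mul_assoc a b c := by
    ext : 1
    · exact add_assoc _ _ _
    · show (a.m + shf a.s b.m) + shf (a.s + b.s) c.m
        = a.m + shf a.s (b.m + shf b.s c.m)
      rw [shf_add, shf_shf, add_assoc]
  one_mul a := by ext : 1 <;> simp
  mul_one a := by ext : 1 <;> simp
  inv_mul_cancel a := by
    ext : 1
    · simp
    · show -(shf (-a.s) a.m) + shf (-a.s) a.m = 0
      simp

def gen : Fin 2 → GG := ![⟨0, fb⟩, ⟨1, 0⟩]

def psi : FreeGroup (Fin 2) →* GG := FreeGroup.lift gen

@[simp] lemma psi_x : psi (FreeGroup.of 0) = ⟨0, fb⟩ := by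
  simp [psi, gen]
@[simp] lemma psi_y : psi (FreeGroup.of 1) = ⟨1, 0⟩ := by
  simp [psi, gen]

def projS : GG →* Multiplicative (ZMod 4) where
  toFun g := Multiplicative.ofAdd g.s
  map_one' := rfl
  map_mul' _ _ := rfl

def c4 : Multiplicative ℤ →* Multiplicative (ZMod 4) :=
  AddMonoidHom.toMultiplicative (Int.castAddHom (ZMod 4))

lemma psi_s (w : FreeGroup (Fin 2)) : (psi w).s = ((expy w : ℤ) : ZMod 4) := by
  have h : projS.comp psi
      = c4.comp (FreeGroup.lift fun i => Multiplicative.ofAdd (if i = 1 then (1 : ℤ) else 0)) := by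
    apply FreeGroup.ext_hom
    intro a
    fin_cases a <;> simp [projS, c4, psi, gen] <;> rfl
  have h2 := DFunLike.congr_fun h w
  exact Multiplicative.toAdd.injective h2

lemma expy_commutator {w : FreeGroup (Fin 2)} (hw : w ∈ commutator (FreeGroup (Fin 2))) :
    expy w = 0 := by
  have h := Abelianization.commutator_subset_ker
    (FreeGroup.lift fun i => Multiplicative.ofAdd (if i = 1 then (1 : ℤ) else 0)) hw
  rw [MonoidHom.mem_ker] at h
  unfold expy
  rw [h]
  rfl

lemma psi_s_comm {w : FreeGroup (Fin 2)} (hw : w ∈ commutator (FreeGroup (Fin 2))) :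
    (psi w).s = 0 := by
  rw [psi_s, expy_commutator hw]
  simp

def c0 : FreeGroup (Fin 2) := ⁅FreeGroup.of (0 : Fin 2), FreeGroup.of (1 : Fin 2)⁆

lemma comm_eq : commutator (FreeGroup (Fin 2)) = Subgroup.normalClosure {c0} := by
  apply le_antisymm
  · rw [commutator_def, Subgroup.commutator_le]
    intro a ha b hb
    clear ha hb
    set N := Subgroup.normalClosure {c0}
    set π := QuotientGroup.mk' N with hπ
    have hmem : ∀ g : FreeGroup (Fin 2), π g = 1 → g ∈ N := by
      intro g hg
      have := QuotientGroup.ker_mk' N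
      rw [← this, MonoidHom.mem_ker]
      exact hg
    have hxy : Commute (π (FreeGroup.of 0)) (π (FreeGroup.of 1)) := by
      rw [← commutatorElement_eq_one_iff_commute, ← map_commutatorElement]
      have : c0 ∈ N := Subgroup.subset_normalClosure rfl
      rwa [← MonoidHom.mem_ker, QuotientGroup.ker_mk' N]
    have hgen : ∀ (i : Fin 2) (b : FreeGroup (Fin 2)), Commute (π (FreeGroup.of i)) (π b) := by
      intro i b
      induction b using FreeGroup.induction_on with
      | C1 => simp
      | of x =>
        fin_cases i <;> fin_cases x
        · exact Commute.refl _
        · exact hxy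
        · exact hxy.symm
        · exact Commute.refl _
      | inv_of x ih => rw [map_inv]; exact ih.inv_right
      | mul x y ihx ihy => rw [map_mul]; exact ihx.mul_right ihy
    have hall : Commute (π a) (π b) := by
      induction a using FreeGroup.induction_on with
      | C1 => simp
      | of x => exact hgen x b
      | inv_of x ih => rw [map_inv]; exact ih.inv_left
      | mul x y ihx ihy => rw [map_mul]; exact ihx.mul_left ihy
    apply hmem
    rw [map_commutatorElement, commutatorElement_eq_one_iff_commute]
    exact hall
  · apply Subgroup.normalClosure_le_normal
    rw [Set.singleton_subset_iff]
    rw [commutator_def]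
    exact Subgroup.commutator_mem_commutator (Subgroup.mem_top _) (Subgroup.mem_top _)

lemma conj_eq (g h : GG) (hh : h.s = 0) : g * h * g⁻¹ = ⟨0, shf g.s h.m⟩ := by
  ext : 1
  · simp [hh]
  · show (g.m + shf g.s h.m) + shf (g.s + h.s) (-(shf (-g.s) g.m)) = shf g.s h.m
    rw [hh, add_zero, shf_neg, shf_shf, add_neg_cancel, shf_zero]
    abel

lemma psi_c0 : psi c0 = ⟨0, fb - shf 1 fb⟩ := by
  rw [c0, commutatorElement_def, map_mul, map_mul, map_mul, map_inv, map_inv, psi_x, psi_y]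
  ext : 1
  · show (0 : ZMod 4) + 1 + -0 + -1 = 0
    decide
  · show ((fb + shf 0 (0:VV)) + shf (0+1) (-(shf (-0) fb))) + shf (0+1+ -0) (-(shf (-1) (0:VV)))
      = fb - shf 1 fb
    simp [sub_eq_add_neg]

def T : Subgroup GG where
  carrier := {g | g.s = 0 ∧ LL g.m = 0}
  one_mem' := ⟨rfl, by simp⟩
  mul_mem' := by
    rintro a b ⟨ha1, ha2⟩ ⟨hb1, hb2⟩
    exact ⟨by simp [ha1, hb1], by rw [mul_m, ha1, shf_zero, LL_add, ha2, hb2, add_zero]⟩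
  inv_mem' := by
    rintro a ⟨h1, h2⟩
    exact ⟨by simp [h1], by rw [inv_m, h1, neg_zero, shf_zero, LL_neg, h2, neg_zero]⟩

lemma mem_T {g : GG} : g ∈ T ↔ g.s = 0 ∧ LL g.m = 0 := Iff.rfl

lemma pow4_mem (g : GG) : g ^ 4 ∈ T := by
  have h : g ^ 4 = g * g * g * g := by rw [pow_succ, pow_succ, pow_succ, pow_one]
  rw [h, mem_T]
  constructor
  · simp [keySum]
  · simp only [mul_m, mul_s]
    exact key4 g.s g.m

lemma main
    (κ : ↥(commutator (FreeGroup (Fin 2))) →* Multiplicative ℤ)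
    (hκ : ∀ (u : FreeGroup (Fin 2)) (w : ↥(commutator (FreeGroup (Fin 2)))),
      (w : FreeGroup (Fin 2)) =
          u * ⁅FreeGroup.of (0 : Fin 2), FreeGroup.of (1 : Fin 2)⁆ * u⁻¹ →
      ((expy u % 4 = 0 ∨ expy u % 4 = 1) → κ w = Multiplicative.ofAdd (1 : ℤ)) ∧
      ((expy u % 4 = 2 ∨ expy u % 4 = 3) → κ w = Multiplicative.ofAdd (-1 : ℤ)))
    (w : FreeGroup (Fin 2)) (hw : w ∈ commutator (FreeGroup (Fin 2))) :
    c4 (κ ⟨w, hw⟩) = Multiplicative.ofAdd (LL ((psi w).m)) := by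
  have hwN : w ∈ Subgroup.closure (Group.conjugatesOfSet {c0}) := comm_eq.le hw
  refine Subgroup.closure_induction
    (p := fun x hx => c4 (κ ⟨x, comm_eq.ge hx⟩) = Multiplicative.ofAdd (LL ((psi x).m)))
    ?_ ?_ ?_ ?_ hwN
  · intro x hx
    rcases Group.mem_conjugatesOfSet_iff.1 hx with ⟨b, hb, hconj⟩
    rcases isConj_iff.1 hconj with ⟨u, hu⟩
    rw [Set.mem_singleton_iff] at hb
    subst hb
    obtain ⟨h1, h2⟩ := hκ u ⟨x, comm_eq.ge (Subgroup.subset_closure hx)⟩ (by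
      show x = _
      rw [← hu]; rfl)
    have hc : ((expy u % 4 : ℤ) : ZMod 4) = ((expy u : ℤ) : ZMod 4) := by
      exact_mod_cast ZMod.intCast_mod (expy u) 4
    have hm : (psi x).m = shf (((expy u % 4 : ℤ) : ZMod 4)) (fb - shf 1 fb) := by
      rw [← hu, map_mul, map_mul, map_inv, conj_eq (psi u) (psi c0) (by rw [psi_c0]),
        psi_c0, psi_s, hc]
    have hcase : expy u % 4 = 0 ∨ expy u % 4 = 1 ∨ expy u % 4 = 2 ∨ expy u % 4 = 3 := by omega
    rcases hcase with h | h | h | h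
    · rw [h1 (Or.inl h), hm, h]; decide
    · rw [h1 (Or.inr h), hm, h]; decide
    · rw [h2 (Or.inl h), hm, h]; decide
    · rw [h2 (Or.inr h), hm, h]; decide
  · show c4 (κ ⟨(1 : FreeGroup (Fin 2)), comm_eq.ge (Subgroup.one_mem _)⟩)
        = Multiplicative.ofAdd (LL ((psi (1 : FreeGroup (Fin 2))).m))
    have : (⟨1, comm_eq.ge (Subgroup.one_mem _)⟩ : ↥(commutator (FreeGroup (Fin 2)))) = 1 := rfl
    rw [this, map_one, map_one, map_one]
    simp
  · intro x y hx hy ihx ihy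
    have hxc := comm_eq.ge hx
    have hyc := comm_eq.ge hy
    have he : (⟨x * y, comm_eq.ge (mul_mem hx hy)⟩ : ↥(commutator (FreeGroup (Fin 2))))
        = ⟨x, hxc⟩ * ⟨y, hyc⟩ := rfl
    rw [he, map_mul, map_mul, ihx, ihy, map_mul, mul_m, psi_s_comm hxc, shf_zero, LL_add]
    rfl
  · intro x hx ih
    have hxc := comm_eq.ge hx
    have he : (⟨x⁻¹, comm_eq.ge (inv_mem hx)⟩ : ↥(commutator (FreeGroup (Fin 2))))
        = (⟨x, hxc⟩)⁻¹ := rfl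
    rw [he, map_inv, map_inv, ih, map_inv, inv_m, psi_s_comm hxc, neg_zero, shf_zero, LL_neg]
    rfl

end S16

theorem stmt_16
    (κ : ↥(commutator (FreeGroup (Fin 2))) →* Multiplicative ℤ)
    (hκ : ∀ (u : FreeGroup (Fin 2)) (w : ↥(commutator (FreeGroup (Fin 2)))),
      (w : FreeGroup (Fin 2)) =
          u * ⁅FreeGroup.of (0 : Fin 2), FreeGroup.of (1 : Fin 2)⁆ * u⁻¹ →
      ((expy u % 4 = 0 ∨ expy u % 4 = 1) → κ w = Multiplicative.ofAdd (1 : ℤ)) ∧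
      ((expy u % 4 = 2 ∨ expy u % 4 = 3) → κ w = Multiplicative.ofAdd (-1 : ℤ)))
    (z : ↥(commutator (FreeGroup (Fin 2))))
    (L : List (FreeGroup (Fin 2))) (hL : L ≠ [])
    (hz : (z : FreeGroup (Fin 2)) = (L.map (fun u => u ^ 4)).prod) :
    (4 : ℤ) ∣ Multiplicative.toAdd (κ z) := by
  have hpsiz : S16.psi (z : FreeGroup (Fin 2)) ∈ S16.T := by
    rw [hz, map_list_prod, List.map_map]
    apply Subgroup.list_prod_mem
    intro g hg
    rcases List.mem_map.1 hg with ⟨u, hu, rfl⟩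
    show S16.psi (u ^ 4) ∈ S16.T
    rw [map_pow]
    exact S16.pow4_mem _
  have hmain := S16.main κ hκ (z : FreeGroup (Fin 2)) z.2
  have hz2 : (⟨(z : FreeGroup (Fin 2)), z.2⟩ : ↥(commutator (FreeGroup (Fin 2)))) = z := rfl
  rw [hz2, (S16.mem_T.1 hpsiz).2] at hmain
  have h0 : ((Multiplicative.toAdd (κ z) : ℤ) : ZMod 4) = 0 := by
    have := congrArg Multiplicative.toAdd hmain
    simpa [S16.c4] using this
  have := (ZMod.intCast_zmod_eq_zero_iff_dvd _ 4).1 h0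
  exact_mod_cast this
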